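/- Let x ∈ ℝ⁹ with x₁ ≥ ⋯ ≥ x₉ > 0, L₁(x) ≥ 0, det L₁(x) = 0, and let x' be obtained from x by replacing (x₄, x₇) with (x₄+δ, x₇−δ) for small δ > 0 such that x' is still sorted non-increasingly and positive. Then det L₁(x') < 0. -/

import Mathlib

/-- The Hildebrand matrix `L₁` built from a vector `x ∈ ℝ⁹` (indices `x 0, …, x 8`
correspond to `x₁, …, x₉`). -/
def L1 (x : Fin 9 → ℝ) : Matrix (Fin 3) (Fin 3) ℝ :=
  !![2 * x 8, x 7 - x 0, x 5 - x 1;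
     x 7 - x 0, 2 * x 6, x 4 - x 2;
     x 5 - x 1, x 4 - x 2, 2 * x 3]

/-- Let `x₁ ≥ ⋯ ≥ x₉ > 0` with `L₁(x) ⪰ 0` and `det L₁(x) = 0`, and let `x'` be obtained
from `x` by replacing `(x₄, x₇)` with `(x₄+δ, x₇−δ)` for `δ > 0` such that `x'` is still
sorted non-increasingly and positive. Then `det L₁(x') < 0`. -/
theorem det_L1_perturbed_neg (x : Fin 9 → ℝ) (δ : ℝ) (hδ : 0 < δ)
    (x' : Fin 9 → ℝ)
    (hx' : x' = fun i => if i = 3 then x 3 + δ else if i = 6 then x 6 - δ else x i)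
    (hsort : ∀ i j : Fin 9, i ≤ j → x j ≤ x i)
    (hpos : ∀ i, 0 < x i)
    (hsort' : ∀ i j : Fin 9, i ≤ j → x' j ≤ x' i)
    (hpos' : ∀ i, 0 < x' i)
    (hL1 : (L1 x).PosSemidef)
    (hdet : (L1 x).det = 0) :
    (L1 x').det < 0 := by
  have e0 : x' 0 = x 0 := by simp only [hx']; rw [if_neg (by decide), if_neg (by decide)]
  have e1 : x' 1 = x 1 := by simp only [hx']; rw [if_neg (by decide), if_neg (by decide)]
  have e2 : x' 2 = x 2 := by simp only [hx']; rw [if_neg (by decide), if_neg (by decide)]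
  have e3 : x' 3 = x 3 + δ := by simp only [hx']; simp
  have e4 : x' 4 = x 4 := by simp only [hx']; rw [if_neg (by decide), if_neg (by decide)]
  have e5 : x' 5 = x 5 := by simp only [hx']; rw [if_neg (by decide), if_neg (by decide)]
  have e6 : x' 6 = x 6 - δ := by simp only [hx']; simp
  have e7 : x' 7 = x 7 := by simp only [hx']; rw [if_neg (by decide), if_neg (by decide)]
  have e8 : x' 8 = x 8 := by simp only [hx']; rw [if_neg (by decide), if_neg (by decide)]
  have h01 : x 1 ≤ x 0 := hsort 0 1 (by decide)
  have h15 : x 5 ≤ x 1 := hsort 1 5 (by decide)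
  have h57 : x 7 ≤ x 5 := hsort 5 7 (by decide)
  have h36 : x 6 ≤ x 3 := hsort 3 6 (by decide)
  have h8 : 0 < x 8 := hpos 8
  have hd : (L1 x).det = 2 * x 8 * (2 * x 6) * (2 * x 3) - 2 * x 8 * (x 4 - x 2) * (x 4 - x 2)
      - (x 7 - x 0) * (x 7 - x 0) * (2 * x 3) + (x 7 - x 0) * (x 4 - x 2) * (x 5 - x 1)
      + (x 5 - x 1) * (x 7 - x 0) * (x 4 - x 2) - (x 5 - x 1) * (2 * x 6) * (x 5 - x 1) := by
    rw [L1, Matrix.det_fin_three]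
    norm_num [Matrix.cons_val_two, Matrix.vecHead, Matrix.vecTail]
  have hd' : (L1 x').det = 2 * x 8 * (2 * (x 6 - δ)) * (2 * (x 3 + δ))
      - 2 * x 8 * (x 4 - x 2) * (x 4 - x 2)
      - (x 7 - x 0) * (x 7 - x 0) * (2 * (x 3 + δ)) + (x 7 - x 0) * (x 4 - x 2) * (x 5 - x 1)
      + (x 5 - x 1) * (x 7 - x 0) * (x 4 - x 2)
      - (x 5 - x 1) * (2 * (x 6 - δ)) * (x 5 - x 1) := by
    rw [L1, Matrix.det_fin_three]
    simp only [e0, e1, e2, e3, e4, e5, e6, e7, e8]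
    norm_num [Matrix.cons_val_two, Matrix.vecHead, Matrix.vecTail]
  have key : (L1 x').det = (L1 x).det
      - 2 * δ * ((x 0 - x 7)^2 - (x 1 - x 5)^2 + 4 * (x 3 - x 6) * x 8) - 8 * x 8 * δ^2 := by
    rw [hd, hd']; ring
  have hba : x 1 - x 5 ≤ x 0 - x 7 := by linarith
  have hb0 : 0 ≤ x 1 - x 5 := by linarith
  have hE : 0 ≤ (x 0 - x 7)^2 - (x 1 - x 5)^2 + 4 * (x 3 - x 6) * x 8 := by
    have h1 : (x 1 - x 5)^2 ≤ (x 0 - x 7)^2 := by nlinarith [hba, hb0]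
    have h2 : 0 ≤ (x 3 - x 6) * x 8 := mul_nonneg (sub_nonneg.2 h36) h8.le
    linarith
  rw [key, hdet]
  have hq1 : 0 ≤ δ * ((x 0 - x 7)^2 - (x 1 - x 5)^2 + 4 * (x 3 - x 6) * x 8) :=
    mul_nonneg hδ.le hE
  have hq2 : 0 < x 8 * δ^2 := mul_pos h8 (pow_pos hδ 2)
  clear hd hd' key hx' hsort hpos hsort' hpos' hL1 hdet e0 e1 e2 e3 e4 e5 e6 e7 e8
  nlinarith [hq1, hq2]
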